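/- Define q(0)=1 and q(n+1) = (n+1)·q(n) + 2·Σ_{k=0}^{n-1} C(n+1,k)·q(k) for n ≥ 0. Then the exponential generating function Q̂(z) = Σ_{n≥0} q(n)·zⁿ/n! formally satisfies (z + 3 − 2eᶻ)·Q̂(z) = 1. -/

import Mathlib

open PowerSeries Finset

theorem stmt_17 (q : ℕ → ℕ) (h0 : q 0 = 1)
    (hrec : ∀ n, q (n + 1) =
      (n + 1) * q n + 2 * ∑ k ∈ Finset.range n, Nat.choose (n + 1) k * q k) :
    (PowerSeries.X + 3 - 2 * PowerSeries.exp ℚ) *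
      PowerSeries.mk (fun n => (q n : ℚ) / n.factorial) = 1 := by
  set Q : PowerSeries ℚ := PowerSeries.mk (fun n => (q n : ℚ) / n.factorial) with hQ
  have expand : (PowerSeries.X + 3 - 2 * PowerSeries.exp ℚ) * Q
      = X * Q + 3 * Q - 2 * (exp ℚ * Q) := by ring
  rw [expand]
  have hexp : ∀ m, coeff m (exp ℚ * Q)
      = ∑ k ∈ range (m+1), ((Nat.choose m k : ℚ) * q k) / m.factorial := by
    intro m
    rw [coeff_mul, Finset.Nat.sum_antidiagonal_eq_sum_range_succ_mk,
      ← Finset.sum_range_reflect]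
    apply Finset.sum_congr rfl
    intro k hk
    rw [Finset.mem_range] at hk
    have hk' : k ≤ m := Nat.lt_succ_iff.mp hk
    simp only [hQ, coeff_mk, coeff_exp, Algebra.algebraMap_self, map_one, RingHom.id_apply]
    have hs1 : m + 1 - 1 - k = m - k := by omega
    have hs2 : m - (m - k) = k := by omega
    rw [hs1, hs2]
    have key : (m.choose k : ℚ) * k.factorial * (m - k).factorial = m.factorial := by
      exact_mod_cast congrArg (Nat.cast : ℕ → ℚ) (Nat.choose_mul_factorial_mul_factorial hk')
    have f1 : ((m-k).factorial : ℚ) ≠ 0 := Nat.cast_ne_zero.mpr (Nat.factorial_ne_zero _)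
    have f2 : (k.factorial : ℚ) ≠ 0 := Nat.cast_ne_zero.mpr (Nat.factorial_ne_zero _)
    have f3 : (m.factorial : ℚ) ≠ 0 := Nat.cast_ne_zero.mpr (Nat.factorial_ne_zero _)
    have f4 : (m.choose k : ℚ) ≠ 0 := Nat.cast_ne_zero.mpr (Nat.choose_pos hk').ne'
    rw [← key]
    field_simp
  have h3 : ∀ m, coeff m (3 * Q) = 3 * ((q m : ℚ) / m.factorial) := by
    intro m
    rw [show (3 : PowerSeries ℚ) = C (R := ℚ) 3 from (map_ofNat (C (R := ℚ)) 3).symm, coeff_C_mul, hQ, coeff_mk]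
  have h2 : ∀ m, coeff m (2 * (exp ℚ * Q)) = 2 * coeff m (exp ℚ * Q) := by
    intro m
    rw [show (2 : PowerSeries ℚ) = C (R := ℚ) 2 from (map_ofNat (C (R := ℚ)) 2).symm, coeff_C_mul]
  ext n
  rcases n with _ | n
  · rw [map_sub, map_add, h3 0, h2 0, hexp 0, coeff_zero_X_mul]
    simp [h0]
    norm_num
  · rw [map_sub, map_add, coeff_succ_X_mul, h3 (n+1), h2 (n+1), hexp (n+1),
      Finset.sum_range_succ, Finset.sum_range_succ, Nat.choose_succ_self_right,
      Nat.choose_self, hQ, coeff_mk, coeff_one]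
    simp only [Nat.succ_ne_zero, if_false]
    have hrecQ : (q (n+1) : ℚ)
        = (n+1) * q n + 2 * ∑ k ∈ range n, ((n+1).choose k : ℚ) * q k := by
      rw [hrec n]; push_cast; ring
    rw [← Finset.sum_div]
    have f1 : (n.factorial : ℚ) ≠ 0 := Nat.cast_ne_zero.mpr (Nat.factorial_ne_zero _)
    have f2 : ((n+1).factorial : ℚ) ≠ 0 := Nat.cast_ne_zero.mpr (Nat.factorial_ne_zero _)
    have hfac : ((n+1).factorial : ℚ) = (n+1) * n.factorial := by
      rw [Nat.factorial_succ]; push_cast; ring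
    rw [hfac]
    rw [hrecQ]
    field_simp
    push_cast
    ring
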